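/- Let a > 0 and let γ : [0,a] → ℝⁿ be a twice continuously differentiable closed curve (γ(0) = γ(a)) parametrized by arclength, i.e. |γ'(t)| = 1 for all t ∈ [0,a]. Then the total curvature of γ satisfies ∫₀ᵃ |γ''(t)| dt ≥ π/2. -/

import Mathlib

open Set Real MeasureTheory intervalIntegral

/-- Let `a > 0` and let `γ : [0,a] → ℝⁿ` be a twice continuously
differentiable closed curve (`γ(0) = γ(a)`) parametrized by arclength (`|γ'(t)| = 1`
for all `t ∈ [0,a]`). Then the total curvature satisfies `∫₀ᵃ |γ''(t)| dt ≥ π/2`. -/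
theorem statement15 (n : ℕ) (a : ℝ) (ha : 0 < a)
    (γ γ' γ'' : ℝ → EuclideanSpace ℝ (Fin n))
    (hderiv1 : ∀ t ∈ Set.Icc (0 : ℝ) a, HasDerivWithinAt γ (γ' t) (Set.Icc (0 : ℝ) a) t)
    (hderiv2 : ∀ t ∈ Set.Icc (0 : ℝ) a, HasDerivWithinAt γ' (γ'' t) (Set.Icc (0 : ℝ) a) t)
    (hcont : ContinuousOn γ'' (Set.Icc (0 : ℝ) a))
    (hunit : ∀ t ∈ Set.Icc (0 : ℝ) a, ‖γ' t‖ = 1)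
    (hclosed : γ 0 = γ a) :
    ∫ t in (0 : ℝ)..a, ‖γ'' t‖ ≥ Real.pi / 2 := by
  have h0I : (0 : ℝ) ∈ Set.Icc (0 : ℝ) a := ⟨le_refl 0, ha.le⟩
  set e : EuclideanSpace ℝ (Fin n) := γ' 0 with he
  have he1 : ‖e‖ = 1 := hunit 0 h0I
  set f : ℝ → ℝ := fun t => (inner ℝ (γ' t) e : ℝ) with hfdef
  have hf0 : f 0 = 1 := by
    simp only [hfdef, he, real_inner_self_eq_norm_sq]
    rw [he1]; norm_num
  -- continuity
  have hg'c : ContinuousOn γ' (Set.Icc 0 a) := fun t ht => (hderiv2 t ht).continuousWithinAt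
  have hfc : ContinuousOn f (Set.Icc 0 a) := hg'c.inner continuousOn_const
  -- f ≤ 1
  have hfle : ∀ t ∈ Set.Icc (0 : ℝ) a, f t ≤ 1 := by
    intro t ht
    calc f t ≤ |f t| := le_abs_self _
      _ ≤ ‖γ' t‖ * ‖e‖ := abs_real_inner_le_norm _ _
      _ = 1 := by rw [hunit t ht, he1]; norm_num
  -- derivative of f
  have hfd : ∀ t ∈ Set.Icc (0 : ℝ) a,
      HasDerivWithinAt f (inner ℝ (γ'' t) e : ℝ) (Set.Icc 0 a) t := by
    intro t ht
    have := (hderiv2 t ht).inner ℝ (hasDerivWithinAt_const t _ e)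
    simpa using this
  -- norm of γ'' integrable
  have hnormint : IntervalIntegrable (fun t => ‖γ'' t‖) volume 0 a := by
    apply ContinuousOn.intervalIntegrable
    rw [Set.uIcc_of_le ha.le]; exact hcont.norm
  -- ∫ f = 0
  have hintf : ∫ t in (0 : ℝ)..a, f t = 0 := by
    have hΓ : ∀ t ∈ Set.Icc (0 : ℝ) a,
        HasDerivWithinAt (fun t => (inner ℝ (γ t) e : ℝ)) (f t) (Set.Icc 0 a) t := by
      intro t ht
      have := (hderiv1 t ht).inner ℝ (hasDerivWithinAt_const t _ e)
      simpa using this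
    have hΓc : ContinuousOn (fun t => (inner ℝ (γ t) e : ℝ)) (Set.Icc 0 a) :=
      fun t ht => (hΓ t ht).continuousWithinAt
    have hΓd : ∀ x ∈ Set.Ioo (0 : ℝ) a,
        HasDerivWithinAt (fun t => (inner ℝ (γ t) e : ℝ)) (f x) (Set.Ioi x) x := by
      intro x hx
      exact ((hΓ x ⟨hx.1.le, hx.2.le⟩).hasDerivAt (Icc_mem_nhds hx.1 hx.2)).hasDerivWithinAt
    have hfint : IntervalIntegrable f volume 0 a := by
      apply ContinuousOn.intervalIntegrable
      rw [Set.uIcc_of_le ha.le]; exact hfc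
    rw [intervalIntegral.integral_eq_sub_of_hasDeriv_right_of_le ha.le hΓc hΓd hfint]
    rw [hclosed]; ring
  -- there is a point where f ≤ 0
  have hex : ∃ t' ∈ Set.Icc (0 : ℝ) a, f t' ≤ 0 := by
    by_contra h
    push_neg at h
    have hfint : IntervalIntegrable f volume 0 a := by
      apply ContinuousOn.intervalIntegrable
      rw [Set.uIcc_of_le ha.le]; exact hfc
    have : 0 < ∫ t in (0 : ℝ)..a, f t :=
      intervalIntegral.intervalIntegral_pos_of_pos_on hfint
        (fun x hx => h x ⟨hx.1.le, hx.2.le⟩) ha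
    linarith [hintf]
  obtain ⟨t', ht'I, ht'le⟩ := hex
  -- first time f ≤ 0
  set S : Set ℝ := Set.Icc 0 a ∩ f ⁻¹' Set.Iic 0 with hSdef
  have hScl : IsClosed S := hfc.preimage_isClosed_of_isClosed isClosed_Icc isClosed_Iic
  have hSne : S.Nonempty := ⟨t', ht'I, ht'le⟩
  have hSbd : BddBelow S := ⟨0, fun x hx => hx.1.1⟩
  set t₀ : ℝ := sInf S with ht₀def
  have ht₀S : t₀ ∈ S := hScl.csInf_mem hSne hSbd
  have ht₀I : t₀ ∈ Set.Icc (0 : ℝ) a := ht₀S.1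
  have hft₀ : f t₀ ≤ 0 := ht₀S.2
  have hpos : ∀ x ∈ Set.Icc (0 : ℝ) a, x < t₀ → 0 < f x := by
    intro x hx hlt
    by_contra h
    push_neg at h
    exact absurd (csInf_le hSbd ⟨hx, h⟩) (not_le.2 hlt)
  -- last time before t₀ where f = 1
  set T : Set ℝ := Set.Icc 0 t₀ ∩ f ⁻¹' {1} with hTdef
  have hTcl : IsClosed T :=
    (hfc.mono (Set.Icc_subset_Icc_right ht₀I.2)).preimage_isClosed_of_isClosed
      isClosed_Icc isClosed_singleton
  have hTne : T.Nonempty := ⟨0, ⟨le_refl 0, ht₀I.1⟩, hf0⟩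
  have hTbd : BddAbove T := ⟨t₀, fun x hx => hx.1.2⟩
  set t₁ : ℝ := sSup T with ht₁def
  have ht₁T : t₁ ∈ T := hTcl.csSup_mem hTne hTbd
  have hft₁ : f t₁ = 1 := ht₁T.2
  have ht₁0 : 0 ≤ t₁ := ht₁T.1.1
  have ht₁t₀ : t₁ < t₀ := by
    rcases lt_or_eq_of_le ht₁T.1.2 with h | h
    · exact h
    · rw [h] at hft₁; linarith
  have hsub : Set.Icc t₁ t₀ ⊆ Set.Icc (0 : ℝ) a :=
    Set.Icc_subset_Icc ht₁0 ht₀I.2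
  -- interior facts
  have hxI : ∀ x ∈ Set.Ioo t₁ t₀, x ∈ Set.Icc (0 : ℝ) a :=
    fun x hx => ⟨le_trans ht₁0 hx.1.le, le_trans hx.2.le ht₀I.2⟩
  have hx0a : ∀ x ∈ Set.Ioo t₁ t₀, x ∈ Set.Ioo (0 : ℝ) a :=
    fun x hx => ⟨lt_of_le_of_lt ht₁0 hx.1, lt_of_lt_of_le hx.2 ht₀I.2⟩
  have hfxlt1 : ∀ x ∈ Set.Ioo t₁ t₀, f x < 1 := by
    intro x hx
    rcases lt_or_eq_of_le (hfle x (hxI x hx)) with h | h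
    · exact h
    · exact absurd (le_csSup hTbd ⟨⟨le_trans ht₁0 hx.1.le, hx.2.le⟩, h⟩) (not_le.2 hx.1)
  have hfxpos : ∀ x ∈ Set.Ioo t₁ t₀, 0 < f x :=
    fun x hx => hpos x (hxI x hx) hx.2
  -- the comparison function
  set g : ℝ → ℝ := fun t => Real.arccos (f t) with hgdef
  set g' : ℝ → ℝ := fun x =>
    -(1 / Real.sqrt (1 - f x ^ 2)) * (inner ℝ (γ'' x) e : ℝ) with hg'def
  have hgc : ContinuousOn g (Set.Icc t₁ t₀) :=
    Real.continuous_arccos.comp_continuousOn (hfc.mono hsub)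
  have hgd : ∀ x ∈ Set.Ioo t₁ t₀, HasDerivWithinAt g (g' x) (Set.Ioi x) x := by
    intro x hx
    have hxIcc := hxI x hx
    have hxIoo := hx0a x hx
    have hfd' : HasDerivAt f (inner ℝ (γ'' x) e : ℝ) x :=
      (hfd x hxIcc).hasDerivAt (Icc_mem_nhds hxIoo.1 hxIoo.2)
    have hne1 : f x ≠ 1 := ne_of_lt (hfxlt1 x hx)
    have hnem1 : f x ≠ -1 := by linarith [hfxpos x hx]
    exact (((Real.hasDerivAt_arccos hnem1 hne1).comp x hfd').hasDerivWithinAt)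
  have hφint : IntegrableOn (fun t => ‖γ'' t‖) (Set.Icc t₁ t₀) volume :=
    (hcont.norm.mono hsub).integrableOn_Icc
  have hbound : ∀ x ∈ Set.Ioo t₁ t₀, g' x ≤ ‖γ'' x‖ := by
    intro x hx
    have hxIcc := hxI x hx
    have hxIoo := hx0a x hx
    have hfpos := hfxpos x hx
    have hflt := hfxlt1 x hx
    -- orthogonality γ'' ⟂ γ'
    have horth : (inner ℝ (γ'' x) (γ' x) : ℝ) = 0 := by
      have h1 : HasDerivWithinAt (fun t => (inner ℝ (γ' t) (γ' t) : ℝ))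
          ((inner ℝ (γ' x) (γ'' x) : ℝ) + (inner ℝ (γ'' x) (γ' x) : ℝ)) (Set.Icc 0 a) x :=
        (hderiv2 x hxIcc).inner ℝ (hderiv2 x hxIcc)
      have h2 : HasDerivWithinAt (fun t => (inner ℝ (γ' t) (γ' t) : ℝ)) 0 (Set.Icc 0 a) x := by
        apply (hasDerivWithinAt_const x _ (1 : ℝ)).congr
        · intro y hy
          rw [real_inner_self_eq_norm_sq, hunit y hy]; norm_num
        · rw [real_inner_self_eq_norm_sq, hunit x hxIcc]; norm_num
      have h3 := (h1.hasDerivAt (Icc_mem_nhds hxIoo.1 hxIoo.2)).unique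
        (h2.hasDerivAt (Icc_mem_nhds hxIoo.1 hxIoo.2))
      have haux : (inner ℝ (γ' x) (γ'' x) : ℝ) = inner ℝ (γ'' x) (γ' x) :=
        real_inner_comm _ _
      linarith [h3, haux]
    -- key estimate |⟨γ'', e⟩| ≤ ‖γ''‖ √(1 - f²)
    set s : ℝ := Real.sqrt (1 - f x ^ 2) with hsdef
    have hs : 0 < s := Real.sqrt_pos.2 (by nlinarith)
    have hkey : |(inner ℝ (γ'' x) e : ℝ)| ≤ ‖γ'' x‖ * s := by
      have hv : (inner ℝ (γ'' x) e : ℝ) = inner ℝ (γ'' x) (e - f x • γ' x) := by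
        rw [inner_sub_right, real_inner_smul_right, horth]; ring
      have hnsq : ‖e - f x • γ' x‖ ^ 2 = 1 - f x ^ 2 := by
        rw [norm_sub_sq_real, real_inner_smul_right, norm_smul, hunit x hxIcc, he1]
        have : (inner ℝ e (γ' x) : ℝ) = f x := real_inner_comm _ _
        rw [this]
        simp [abs_mul_abs_self]
        ring
      have hns : ‖e - f x • γ' x‖ = s := by
        rw [hsdef, ← hnsq, Real.sqrt_sq (norm_nonneg _)]
      rw [hv]
      calc |(inner ℝ (γ'' x) (e - f x • γ' x) : ℝ)|
          ≤ ‖γ'' x‖ * ‖e - f x • γ' x‖ := abs_real_inner_le_norm _ _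
        _ = ‖γ'' x‖ * s := by rw [hns]
    -- conclude
    have h1 : -(inner ℝ (γ'' x) e : ℝ) ≤ ‖γ'' x‖ * s :=
      (neg_le_abs _).trans hkey
    have h2 : g' x = (-(inner ℝ (γ'' x) e : ℝ)) / s := by
      rw [hg'def]; ring
    rw [h2, div_le_iff₀ hs]
    exact h1
  -- main inequality from FTC comparison
  have main : g t₀ - g t₁ ≤ ∫ y in t₁..t₀, ‖γ'' y‖ :=
    intervalIntegral.sub_le_integral_of_hasDeriv_right_of_le ht₁t₀.le hgc hgd hφint hbound
  have hg1 : g t₁ = 0 := by rw [hgdef]; simp [hft₁]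
  have hg0 : Real.pi / 2 ≤ g t₀ := by
    rw [hgdef]
    simp only [Real.arccos]
    have := Real.arcsin_nonpos.2 hft₀
    linarith
  have hmono : ∫ y in t₁..t₀, ‖γ'' y‖ ≤ ∫ t in (0 : ℝ)..a, ‖γ'' t‖ :=
    intervalIntegral.integral_mono_interval ht₁0 ht₁t₀.le ht₀I.2
      (Filter.Eventually.of_forall fun x => norm_nonneg _) hnormint
  linarith
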